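/- Let H be a non-separable complex Hilbert space and X a closed subspace whose Hilbert dimension is strictly less than that of H. Then there is no closed subspace Q of H such that both Q ∩ X^⊥ = 0 and Q^⊥ ∩ X^⊥ = 0. -/

import Mathlib

open Function Submodule
open scoped ENNReal

local notation "⟪" x ", " y "⟫" => @inner ℂ _ _ x y

/-- For a Hilbert basis `c` of `H` and any `x : H`, only countably many basis vectors
have nonzero inner product with `x`. -/
lemma stmt3_countable_support {H : Type} [NormedAddCommGroup H] [InnerProductSpace ℂ H]
    {κ : Type} (c : HilbertBasis κ ℂ H) (x : H) :
    {k : κ | ⟪c k, x⟫ ≠ 0}.Countable := by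
  have h : Summable (fun k => ‖c.repr x k‖ ^ (2 : ℝ≥0∞).toReal) :=
    (lp.memℓp (c.repr x)).summable (by norm_num)
  refine h.countable_support.mono ?_
  intro k hk
  simp only [Set.mem_setOf_eq] at hk
  have : c.repr x k ≠ 0 := by rwa [c.repr_apply_apply]
  simp [Function.mem_support, this, ENNReal.toReal_ofNat]

/-- If a family `v : J → H` is total (only `0` is orthogonal to all of it), then any
Hilbert basis of `H` has cardinality at most `#J * ℵ₀`. -/
lemma stmt3_card_le {H : Type} [NormedAddCommGroup H] [InnerProductSpace ℂ H]
    {κ J : Type} (c : HilbertBasis κ ℂ H) (v : J → H)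
    (htot : ∀ x : H, (∀ j, ⟪v j, x⟫ = 0) → x = 0) :
    Cardinal.mk κ ≤ Cardinal.mk J * Cardinal.aleph0 := by
  have hex : ∀ k : κ, ∃ j, ⟪c k, v j⟫ ≠ 0 := by
    intro k
    by_contra h
    push_neg at h
    have hzero : c k = 0 := htot (c k) (fun j => by
      rw [← inner_conj_symm, h j, map_zero])
    exact c.orthonormal.ne_zero k hzero
  choose jf hjf using hex
  set S : J → Set κ := fun j => {k' : κ | ⟪c k', v j⟫ ≠ 0} with hS
  have hF : Function.Injective (fun k : κ => (⟨jf k, ⟨k, hjf k⟩⟩ : Σ j, S j)) := by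
    have : Function.LeftInverse (fun p : Σ j, S j => (p.2 : κ))
        (fun k : κ => (⟨jf k, ⟨k, hjf k⟩⟩ : Σ j, S j)) := fun k => rfl
    exact this.injective
  calc Cardinal.mk κ ≤ Cardinal.mk (Σ j, S j) := Cardinal.mk_le_of_injective hF
    _ = Cardinal.sum (fun j => Cardinal.mk (S j)) := Cardinal.mk_sigma _
    _ ≤ Cardinal.sum (fun _ : J => Cardinal.aleph0) := by
        refine Cardinal.sum_le_sum _ _ (fun j => ?_)
        have : Countable (S j) := (stmt3_countable_support c (v j)).to_subtype
        exact Cardinal.mk_le_aleph0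
    _ = Cardinal.mk J * Cardinal.aleph0 := Cardinal.sum_const' _ _

/-- If `H` is a non-separable complex Hilbert space and `X` is a closed
subspace whose Hilbert dimension is strictly smaller than that of `H`, then there is
no closed subspace `Q` with `Q ⊓ Xᗮ = ⊥` and `Qᗮ ⊓ Xᗮ = ⊥`. -/
theorem stmt3 {H : Type} [NormedAddCommGroup H] [InnerProductSpace ℂ H]
    [CompleteSpace H] (hH : ¬ TopologicalSpace.SeparableSpace H)
    (X : Submodule ℂ H) (hXc : IsClosed (X : Set H))
    (hdim : ∃ (ι κ : Type) (_ : HilbertBasis ι ℂ X) (_ : HilbertBasis κ ℂ H),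
      Cardinal.mk ι < Cardinal.mk κ) :
    ¬ ∃ Q : Submodule ℂ H, IsClosed (Q : Set H) ∧
        Q ⊓ Xᗮ = ⊥ ∧ Qᗮ ⊓ Xᗮ = ⊥ := by
  rintro ⟨Q, hQc, hQ1, hQ2⟩
  obtain ⟨ι, κ, b, c, hlt⟩ := hdim
  haveI : CompleteSpace X := hXc.completeSpace_coe
  haveI : CompleteSpace Q := hQc.completeSpace_coe
  haveI : CompleteSpace (Qᗮ : Submodule ℂ H) := (Submodule.isClosed_orthogonal Q).completeSpace_coe
  -- `H` is non-separable, so any Hilbert basis of `H` is uncountable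
  have hκ : Cardinal.aleph0 < Cardinal.mk κ := by
    rw [← not_le]
    intro hle
    haveI : Countable κ := Cardinal.mk_le_aleph0_iff.mp hle
    apply hH
    rw [← TopologicalSpace.isSeparable_univ_iff]
    have hsep : TopologicalSpace.IsSeparable
        ((Submodule.span ℂ (Set.range c) : Submodule ℂ H) : Set H) :=
      (Set.countable_range c).isSeparable.span
    have hcl : closure ((Submodule.span ℂ (Set.range c) : Submodule ℂ H) : Set H)
        = Set.univ := by
      rw [← Submodule.topologicalClosure_coe, c.dense_span, Submodule.top_coe]
    simpa [hcl] using hsep.closure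
  -- the projections to `X`, restricted to `Q` and `Qᗮ`, are injective
  set f : Q →L[ℂ] X := (orthogonalProjection X).comp Q.subtypeL with hf
  set g : (Qᗮ : Submodule ℂ H) →L[ℂ] X := (orthogonalProjection X).comp Qᗮ.subtypeL with hg
  have hfinj : Function.Injective f := by
    rw [injective_iff_map_eq_zero]
    intro q hq
    have h1 : (q : H) ∈ Xᗮ := orthogonalProjection_eq_zero_iff.mp hq
    have h2 : (q : H) ∈ Q ⊓ Xᗮ := ⟨q.2, h1⟩
    rw [hQ1, Submodule.mem_bot] at h2
    exact Subtype.ext h2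
  have hginj : Function.Injective g := by
    rw [injective_iff_map_eq_zero]
    intro q hq
    have h1 : (q : H) ∈ Xᗮ := orthogonalProjection_eq_zero_iff.mp hq
    have h2 : (q : H) ∈ Qᗮ ⊓ Xᗮ := ⟨q.2, h1⟩
    rw [hQ2, Submodule.mem_bot] at h2
    exact Subtype.ext h2
  -- the images of the basis of `X` under the adjoints form a total family in `H`
  set v : ι ⊕ ι → H := Sum.elim
    (fun i => ((ContinuousLinearMap.adjoint f (b i) : Q) : H))
    (fun i => ((ContinuousLinearMap.adjoint g (b i) : (Qᗮ : Submodule ℂ H)) : H)) with hv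
  have htot : ∀ x : H, (∀ j, ⟪v j, x⟫ = 0) → x = 0 := by
    intro x hx
    set q : Q := orthogonalProjection Q x with hq
    set q' : (Qᗮ : Submodule ℂ H) := orthogonalProjection Qᗮ x with hq'
    have hdecomp : (q : H) + (q' : H) = x :=
      Q.starProjection_add_starProjection_orthogonal x
    have hfq : f q = 0 := by
      apply b.repr.map_eq_zero_iff.mp
      apply lp.ext
      funext i
      have key : ⟪b i, f q⟫ = 0 := by
        have h1 : ⟪((ContinuousLinearMap.adjoint f (b i) : Q) : H), x⟫ = 0 := hx (Sum.inl i)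
        have h2 : ⟪((ContinuousLinearMap.adjoint f (b i) : Q) : H), (q' : H)⟫ = 0 :=
          Submodule.inner_right_of_mem_orthogonal
            (ContinuousLinearMap.adjoint f (b i)).2 q'.2
        have h3 : ⟪((ContinuousLinearMap.adjoint f (b i) : Q) : H), (q : H)⟫ = 0 := by
          have := h1
          rw [← hdecomp, inner_add_right, h2, add_zero] at this
          exact this
        calc ⟪b i, f q⟫ = ⟪ContinuousLinearMap.adjoint f (b i), q⟫ :=
              (ContinuousLinearMap.adjoint_inner_left f q (b i)).symm
          _ = ⟪((ContinuousLinearMap.adjoint f (b i) : Q) : H), (q : H)⟫ :=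
              Submodule.coe_inner _ _ _
          _ = 0 := h3
      show b.repr (f q) i = (0 : lp (fun _ : ι => ℂ) 2) i
      rw [b.repr_apply_apply, key]
      rfl
    have hgq : g q' = 0 := by
      apply b.repr.map_eq_zero_iff.mp
      apply lp.ext
      funext i
      have key : ⟪b i, g q'⟫ = 0 := by
        have h1 : ⟪((ContinuousLinearMap.adjoint g (b i) : (Qᗮ : Submodule ℂ H)) : H), x⟫ = 0 :=
          hx (Sum.inr i)
        have h2 : ⟪((ContinuousLinearMap.adjoint g (b i) : (Qᗮ : Submodule ℂ H)) : H),
            (q : H)⟫ = 0 := by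
          rw [inner_eq_zero_symm]
          exact Submodule.inner_right_of_mem_orthogonal q.2
            (ContinuousLinearMap.adjoint g (b i)).2
        have h3 : ⟪((ContinuousLinearMap.adjoint g (b i) : (Qᗮ : Submodule ℂ H)) : H),
            (q' : H)⟫ = 0 := by
          have := h1
          rw [← hdecomp, inner_add_right, h2, zero_add] at this
          exact this
        calc ⟪b i, g q'⟫ = ⟪ContinuousLinearMap.adjoint g (b i), q'⟫ :=
              (ContinuousLinearMap.adjoint_inner_left g q' (b i)).symm
          _ = ⟪((ContinuousLinearMap.adjoint g (b i) : (Qᗮ : Submodule ℂ H)) : H), (q' : H)⟫ :=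
              Submodule.coe_inner _ _ _
          _ = 0 := h3
      show b.repr (g q') i = (0 : lp (fun _ : ι => ℂ) 2) i
      rw [b.repr_apply_apply, key]
      rfl
    have hq0 : q = 0 := hfinj (by rw [hfq, map_zero])
    have hq'0 : q' = 0 := hginj (by rw [hgq, map_zero])
    rw [← hdecomp, hq0, hq'0]
    simp
  -- cardinality contradiction
  have hle := stmt3_card_le c v htot
  have hlt2 : Cardinal.mk (ι ⊕ ι) * Cardinal.aleph0 < Cardinal.mk κ := by
    apply Cardinal.mul_lt_of_lt hκ.le _ hκ
    rw [Cardinal.mk_sum]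
    simp only [Cardinal.lift_id]
    exact Cardinal.add_lt_of_lt hκ.le hlt hlt
  exact absurd hle (not_le.mpr hlt2)
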